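/- Let H be a complex Hilbert space and β ∈ H. For every bounded sequence (T_i) in B(H) and every bounded sequence (ζ_j) in H such that the iterated limits lim_i lim_j ⟨T_i ζ_j, β⟩ and lim_j lim_i ⟨T_i ζ_j, β⟩ both exist, these two iterated limits are equal. -/

import Mathlib

open Filter Topology Metric

/-- Weak convergence along an ultrafilter of a bounded sequence in a Hilbert space. -/
lemma weak_ultrafilter_limit {H : Type} [NormedAddCommGroup H] [InnerProductSpace ℂ H]
    [CompleteSpace H] (x : ℕ → H) (C : ℝ) (hx : ∀ n, ‖x n‖ ≤ C) (F : Ultrafilter ℕ) :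
    ∃ z : H, ∀ y : H, Tendsto (fun n => (inner ℂ (x n) y : ℂ)) ↑F (𝓝 (inner ℂ z y)) := by
  set φ : ℕ → WeakDual ℂ H := fun n =>
    (StrongDual.toWeakDual (InnerProductSpace.toDual ℂ H (x n)))
  have hmem : ∀ n, φ n ∈ (WeakDual.toStrongDual ⁻¹' closedBall (0 : StrongDual ℂ H) C) := by
    intro n
    simp only [Set.mem_preimage, mem_closedBall, dist_zero_right]
    show ‖(InnerProductSpace.toDual ℂ H (x n) : StrongDual ℂ H)‖ ≤ C
    rw [(InnerProductSpace.toDual ℂ H).norm_map]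
    exact hx n
  have hcpt := WeakDual.isCompact_closedBall (𝕜 := ℂ) (0 : StrongDual ℂ H) C
  have hle : (WeakDual.toStrongDual ⁻¹' closedBall (0 : StrongDual ℂ H) C) ∈
      (F.map φ : Filter (WeakDual ℂ H)) := by
    exact Filter.mem_map.mpr (F.sets_of_superset Filter.univ_mem (fun n _ => hmem n))
  obtain ⟨ψ, _, hψ⟩ := hcpt.ultrafilter_le_nhds (F.map φ) (le_principal_iff.mpr hle)
  refine ⟨(InnerProductSpace.toDual ℂ H).symm (WeakDual.toStrongDual ψ), fun y => ?_⟩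
  have h1 : Tendsto φ ↑F (𝓝 ψ) := hψ
  have h2 := (tendsto_iff_forall_eval_tendsto_topDualPairing).mp h1 y
  have e1 : ∀ n, (topDualPairing ℂ H) (φ n) y = (inner ℂ (x n) y : ℂ) := by
    intro n; rfl
  have e2 : (topDualPairing ℂ H) ψ y =
      (inner ℂ ((InnerProductSpace.toDual ℂ H).symm (WeakDual.toStrongDual ψ)) y : ℂ) := by
    rw [← InnerProductSpace.toDual_apply_apply, LinearIsometryEquiv.apply_symm_apply]
    rfl
  simpa [e2] using h2.congr (fun n => (e1 n))

/-- Let `H` be a complex Hilbert space and `β ∈ H`. For every bounded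
sequence `(T i)` in `B(H)` and every bounded sequence `(ζ j)` in `H` such that the iterated
limits `lim_i lim_j ⟪T i (ζ j), β⟫` and `lim_j lim_i ⟪T i (ζ j), β⟫` both exist, these two
iterated limits are equal. -/
theorem arens_regular_eval_form {H : Type} [NormedAddCommGroup H] [InnerProductSpace ℂ H]
    [CompleteSpace H] (β : H)
    (T : ℕ → H →L[ℂ] H) (ζ : ℕ → H)
    (hT : ∃ C : ℝ, ∀ i, ‖T i‖ ≤ C) (hζ : ∃ C : ℝ, ∀ j, ‖ζ j‖ ≤ C)
    (g h : ℕ → ℂ) (L₁ L₂ : ℂ)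
    (hg : ∀ i, Tendsto (fun j => (inner ℂ (T i (ζ j)) β : ℂ)) atTop (𝓝 (g i)))
    (hgL : Tendsto g atTop (𝓝 L₁))
    (hh : ∀ j, Tendsto (fun i => (inner ℂ (T i (ζ j)) β : ℂ)) atTop (𝓝 (h j)))
    (hhL : Tendsto h atTop (𝓝 L₂)) :
    L₁ = L₂ := by
  obtain ⟨C₁, hC₁⟩ := hT
  obtain ⟨C₂, hC₂⟩ := hζ
  set u : ℕ → H := fun i => (ContinuousLinearMap.adjoint (T i)) β with hu
  have hinner : ∀ i j, (inner ℂ (T i (ζ j)) β : ℂ) = inner ℂ (ζ j) (u i) := by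
    intro i j
    rw [hu]
    exact (ContinuousLinearMap.adjoint_inner_right (T i) (ζ j) β).symm
  have hubd : ∀ i, ‖u i‖ ≤ C₁ * ‖β‖ := by
    intro i
    calc ‖u i‖ ≤ ‖ContinuousLinearMap.adjoint (T i)‖ * ‖β‖ :=
          (ContinuousLinearMap.adjoint (T i)).le_opNorm β
      _ ≤ C₁ * ‖β‖ := mul_le_mul_of_nonneg_right
          (by rw [show ‖ContinuousLinearMap.adjoint (T i)‖ = ‖T i‖ from LinearIsometryEquiv.norm_map _ _]; exact hC₁ i) (norm_nonneg β)
  set F : Ultrafilter ℕ := Ultrafilter.of atTop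
  have hF : (F : Filter ℕ) ≤ atTop := Ultrafilter.of_le atTop
  obtain ⟨z, hz⟩ := weak_ultrafilter_limit ζ C₂ hC₂ F
  obtain ⟨w, hw⟩ := weak_ultrafilter_limit u (C₁ * ‖β‖) hubd F
  -- g i = ⟪z, u i⟫
  have hgi : ∀ i, g i = inner ℂ z (u i) := by
    intro i
    have h1 : Tendsto (fun j => (inner ℂ (ζ j) (u i) : ℂ)) ↑F (𝓝 (g i)) :=
      ((hg i).congr (fun j => hinner i j)).mono_left hF
    exact tendsto_nhds_unique h1 (hz (u i))
  -- L₁ = ⟪z, w⟫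
  have hL₁ : L₁ = inner ℂ z w := by
    have h1 : Tendsto g ↑F (𝓝 L₁) := hgL.mono_left hF
    have h2 : Tendsto (fun i => (inner ℂ z (u i) : ℂ)) ↑F (𝓝 (inner ℂ z w)) := by
      have := ((Complex.continuous_conj.tendsto _).comp (hw z))
      simpa [Function.comp_def, inner_conj_symm] using this
    exact tendsto_nhds_unique (h1.congr (fun i => hgi i)) h2
  -- h j = ⟪ζ j, w⟫
  have hhj : ∀ j, h j = inner ℂ (ζ j) w := by
    intro j
    have h1 : Tendsto (fun i => (inner ℂ (ζ j) (u i) : ℂ)) ↑F (𝓝 (h j)) :=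
      ((hh j).congr (fun i => hinner i j)).mono_left hF
    have h2 : Tendsto (fun i => (inner ℂ (ζ j) (u i) : ℂ)) ↑F (𝓝 (inner ℂ (ζ j) w)) := by
      have := ((Complex.continuous_conj.tendsto _).comp (hw (ζ j)))
      simpa [Function.comp_def, inner_conj_symm] using this
    exact tendsto_nhds_unique h1 h2
  -- L₂ = ⟪z, w⟫
  have hL₂ : L₂ = inner ℂ z w := by
    have h1 : Tendsto h ↑F (𝓝 L₂) := hhL.mono_left hF
    exact tendsto_nhds_unique (h1.congr (fun j => hhj j)) (hz w)
  rw [hL₁, hL₂]
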